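/- arXiv:2403.18800 — 4 statements merged into one kernel-verified Lean document; each statement's English description precedes it below -/
import Mathlib

section
/- If G is bipartite, then F_k(G) is bipartite for every k with 1≤k≤|V(G)|-1. -/
open Finset

/-- The `k`-token graph of `G`: vertices are the `k`-subsets of `V`, two being adjacent
iff their symmetric difference is a pair `{a,b}` with `a ∈ A`, `b ∈ B`, `G.Adj a b`. -/
def tokenGraph {V : Type*} [DecidableEq V] (G : SimpleGraph V) (k : ℕ) :
    SimpleGraph {s : Finset V // s.card = k} where
  Adj A B := ∃ a b, a ∈ A.1 ∧ b ∈ B.1 ∧ G.Adj a b ∧ symmDiff A.1 B.1 = {a, b}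
  symm := by
    constructor
    rintro A B ⟨a, b, ha, hb, hab, hd⟩
    exact ⟨b, a, hb, ha, hab.symm, by rw [symmDiff_comm, hd, Finset.pair_comm]⟩
  loopless := by
    constructor
    rintro A ⟨a, b, ha, hb, hab, hd⟩
    rw [symmDiff_self] at hd
    exact (Finset.insert_ne_empty a {b}) hd.symm

noncomputable instance tokenGraph.instDecidableRelAdj {V : Type*} [DecidableEq V]
    (G : SimpleGraph V) (k : ℕ) : DecidableRel (tokenGraph G k).Adj :=
  Classical.decRel _

/-- The `(n,k)`-binomial matrix: rows are characteristic vectors of the `k`-subsets. -/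
def binMatrix (V : Type*) [DecidableEq V] (k : ℕ) :
    Matrix {s : Finset V // s.card = k} V ℝ :=
  fun A j => if j ∈ A.1 then 1 else 0

theorem tokenGraph_bipartite {V : Type*} [Fintype V] [DecidableEq V]
    (G : SimpleGraph V) (hG : G.Colorable 2) :
    ∀ k, 1 ≤ k → k ≤ Fintype.card V - 1 → (tokenGraph G k).Colorable 2 := by
  intro k _ _
  obtain ⟨c⟩ := hG
  have hcard : Fintype.card (ZMod 2) = 2 := rfl
  rw [← hcard]
  refine SimpleGraph.Coloring.colorable (SimpleGraph.Coloring.mk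
    (fun (A : {s : Finset V // s.card = k}) => ∑ x ∈ A.1, ((c x : Fin 2).val : ZMod 2)) ?_)
  rintro A B ⟨a, b, ha, hb, hab, hd⟩
  have hca : c a ≠ c b := c.valid hab
  have hane : a ≠ b := hab.ne
  have haB : a ∉ B.1 := by
    intro haB
    have : a ∈ symmDiff A.1 B.1 := by rw [hd]; simp
    rw [Finset.mem_symmDiff] at this
    tauto
  have hbA : b ∉ A.1 := by
    intro hbA
    have : b ∈ symmDiff A.1 B.1 := by rw [hd]; simp
    rw [Finset.mem_symmDiff] at this
    tauto
  have hAB : A.1 \ B.1 = {a} := by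
    apply Finset.Subset.antisymm
    · intro x hx
      have : x ∈ symmDiff A.1 B.1 := Finset.mem_symmDiff.2 (Or.inl (Finset.mem_sdiff.1 hx))
      rw [hd, Finset.mem_insert, Finset.mem_singleton] at this
      rcases this with h | h
      · simp [h]
      · exact absurd (h ▸ (Finset.mem_sdiff.1 hx).1) hbA
    · intro x hx
      rw [Finset.mem_singleton] at hx
      subst hx
      exact Finset.mem_sdiff.2 ⟨ha, haB⟩
  have hBA : B.1 \ A.1 = {b} := by
    apply Finset.Subset.antisymm
    · intro x hx
      have : x ∈ symmDiff A.1 B.1 := Finset.mem_symmDiff.2 (Or.inr (Finset.mem_sdiff.1 hx))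
      rw [hd, Finset.mem_insert, Finset.mem_singleton] at this
      rcases this with h | h
      · exact absurd (h ▸ (Finset.mem_sdiff.1 hx).1) haB
      · simp [h]
    · intro x hx
      rw [Finset.mem_singleton] at hx
      subst hx
      exact Finset.mem_sdiff.2 ⟨hb, hbA⟩
  have hAeq : A.1 = {a} ∪ (A.1 ∩ B.1) := by rw [← hAB, Finset.sdiff_union_inter]
  have hBeq : B.1 = {b} ∪ (B.1 ∩ A.1) := by rw [← hBA, Finset.sdiff_union_inter]
  have hdisjA : Disjoint ({a} : Finset V) (A.1 ∩ B.1) := by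
    simp only [Finset.disjoint_singleton_left, Finset.mem_inter]
    tauto
  have hdisjB : Disjoint ({b} : Finset V) (B.1 ∩ A.1) := by
    simp only [Finset.disjoint_singleton_left, Finset.mem_inter]
    tauto
  have hsumA : ∑ x ∈ A.1, ((c x : Fin 2).val : ZMod 2)
      = ((c a : Fin 2).val : ZMod 2) + ∑ x ∈ A.1 ∩ B.1, ((c x : Fin 2).val : ZMod 2) := by
    conv_lhs => rw [hAeq]
    rw [Finset.sum_union hdisjA, Finset.sum_singleton]
  have hsumB : ∑ x ∈ B.1, ((c x : Fin 2).val : ZMod 2)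
      = ((c b : Fin 2).val : ZMod 2) + ∑ x ∈ A.1 ∩ B.1, ((c x : Fin 2).val : ZMod 2) := by
    conv_lhs => rw [hBeq]
    rw [Finset.sum_union hdisjB, Finset.sum_singleton, Finset.inter_comm]
  simp only [hsumA, hsumB, ne_eq, add_left_inj]
  intro h
  apply hca
  have h' : ((c a : Fin 2).val : ZMod 2).val = ((c b : Fin 2).val : ZMod 2).val := by rw [h]
  rw [ZMod.val_natCast_of_lt (c a).isLt, ZMod.val_natCast_of_lt (c b).isLt] at h'
  exact Fin.ext h'
end

section
/- For any graph G on n vertices with Laplacian matrix L₁, and its k-token graph F_k(G) with Laplacian L_k, one has B·L₁ = L_k·B, where B is the (n,k)-binomial matrix. -/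
open Finset

section Aux
set_option linter.unusedSectionVars false
variable {V : Type*} [Fintype V] [DecidableEq V] {G : SimpleGraph V} {k : ℕ}

lemma tokenAdj_iff (A C : {s : Finset V // s.card = k}) :
    (tokenGraph G k).Adj A C ↔
      ∃ a ∈ A.1, ∃ b, b ∉ A.1 ∧ G.Adj a b ∧ C.1 = insert b (A.1.erase a) := by
  constructor
  · rintro ⟨a, b, ha, hb, hab, hd⟩
    have haC : a ∉ C.1 := by
      intro h
      have h1 : a ∉ symmDiff A.1 C.1 := by simp [Finset.mem_symmDiff, ha, h]
      rw [hd] at h1; simp at h1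
    have hbA : b ∉ A.1 := by
      intro h
      have h1 : b ∉ symmDiff A.1 C.1 := by simp [Finset.mem_symmDiff, hb, h]
      rw [hd] at h1; simp at h1
    refine ⟨a, ha, b, hbA, hab, ?_⟩
    ext x
    simp only [Finset.mem_insert, Finset.mem_erase]
    constructor
    · intro hx
      by_cases hxA : x ∈ A.1
      · exact Or.inr ⟨fun h => haC (h ▸ hx), hxA⟩
      · have h1 : x ∈ symmDiff A.1 C.1 := by simp [Finset.mem_symmDiff, hx, hxA]
        rw [hd] at h1
        rcases Finset.mem_insert.1 h1 with rfl | h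
        · exact absurd ha hxA
        · exact Or.inl (Finset.mem_singleton.1 h)
    · rintro (rfl | ⟨hxa, hxA⟩)
      · exact hb
      · by_contra hxC
        have h1 : x ∈ symmDiff A.1 C.1 := by simp [Finset.mem_symmDiff, hxA, hxC]
        rw [hd] at h1
        rcases Finset.mem_insert.1 h1 with rfl | h
        · exact hxa rfl
        · exact hbA (Finset.mem_singleton.1 h ▸ hxA)
  · rintro ⟨a, ha, b, hbA, hab, hC⟩
    have hab' : a ≠ b := fun h => hbA (h ▸ ha)
    refine ⟨a, b, ha, by rw [hC]; exact Finset.mem_insert_self _ _, hab, ?_⟩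
    rw [hC]
    ext x
    simp only [Finset.mem_symmDiff, Finset.mem_insert, Finset.mem_erase, Finset.mem_singleton]
    by_cases hxa : x = a <;> by_cases hxb : x = b <;> simp_all

lemma card_insert_erase {A : Finset V} (hA : A.card = k) {a b : V}
    (ha : a ∈ A) (hb : b ∉ A) : (insert b (A.erase a)).card = k := by
  rw [Finset.card_insert_of_notMem (fun h => hb (Finset.mem_of_mem_erase h)),
    Finset.card_erase_of_mem ha, hA]
  exact Nat.succ_pred_eq_of_pos (hA ▸ Finset.card_pos.2 ⟨a, ha⟩)

lemma insert_erase_inj {A : Finset V} {a b a' b' : V} (hb : b ∉ A)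
    (ha' : a' ∈ A) (hb' : b' ∉ A)
    (h : insert b (A.erase a) = insert b' (A.erase a')) : a = a' ∧ b = b' := by
  have hbb : b = b' := by
    have h0 : b ∈ insert b' (A.erase a') := h ▸ Finset.mem_insert_self _ _
    rcases Finset.mem_insert.1 h0 with h1 | h1
    · exact h1
    · exact absurd (Finset.mem_of_mem_erase h1) hb
  refine ⟨?_, hbb⟩
  by_contra haa
  have h2 : a' ∈ insert b' (A.erase a') := h ▸ Finset.mem_insert_of_mem
    (Finset.mem_erase.2 ⟨fun he => haa he.symm, ha'⟩)
  rcases Finset.mem_insert.1 h2 with h1 | h1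
  · exact hb' (h1 ▸ ha')
  · exact (Finset.mem_erase.1 h1).1 rfl

variable [DecidableRel G.Adj]

lemma sum_token_neighbors (A : {s : Finset V // s.card = k}) (f : Finset V → ℝ) :
    ∑ C : {s : Finset V // s.card = k}, (if (tokenGraph G k).Adj A C then f C.1 else 0)
      = ∑ a ∈ A.1, ∑ b ∈ A.1ᶜ, (if G.Adj a b then f (insert b (A.1.erase a)) else 0) := by
  classical
  rw [← Finset.sum_filter, ← Finset.sum_product', ← Finset.sum_filter]
  refine (Finset.sum_bij (fun (p : V × V) hp => (⟨insert p.2 (A.1.erase p.1),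
      card_insert_erase A.2 (Finset.mem_product.1 (Finset.mem_filter.1 hp).1).1
        (Finset.mem_compl.1 (Finset.mem_product.1 (Finset.mem_filter.1 hp).1).2)⟩ :
        {s : Finset V // s.card = k}))
    ?_ ?_ ?_ ?_).symm
  · intro p hp
    obtain ⟨h1, h4⟩ := Finset.mem_filter.1 hp
    obtain ⟨h2, h3⟩ := Finset.mem_product.1 h1
    refine Finset.mem_filter.2 ⟨Finset.mem_univ _, ?_⟩
    exact (tokenAdj_iff A _).2 ⟨p.1, h2, p.2, Finset.mem_compl.1 h3, h4, rfl⟩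
  · intro p hp q hq heq
    obtain ⟨h1, _⟩ := Finset.mem_filter.1 hp
    obtain ⟨h2, h3⟩ := Finset.mem_product.1 h1
    obtain ⟨h4, _⟩ := Finset.mem_filter.1 hq
    obtain ⟨h5, h6⟩ := Finset.mem_product.1 h4
    have hres := insert_erase_inj (Finset.mem_compl.1 h3) h5 (Finset.mem_compl.1 h6)
      (congrArg Subtype.val heq)
    exact Prod.ext hres.1 hres.2
  · intro C hC
    have hadj := (Finset.mem_filter.1 hC).2
    obtain ⟨a, ha, b, hbA, hab, hCeq⟩ := (tokenAdj_iff A C).1 hadj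
    refine ⟨⟨a, b⟩, Finset.mem_filter.2
      ⟨Finset.mem_product.2 ⟨ha, Finset.mem_compl.2 hbA⟩, hab⟩, ?_⟩
    exact (Subtype.ext hCeq).symm
  · intro p hp
    rfl
end Aux

theorem binMatrix_mul_lap_eq_lap_mul_binMatrix {V : Type*} [Fintype V] [DecidableEq V]
    (G : SimpleGraph V) [DecidableRel G.Adj] (k : ℕ) :
    binMatrix V k * G.lapMatrix ℝ = (tokenGraph G k).lapMatrix ℝ * binMatrix V k := by
  classical
  ext A j
  rw [Matrix.mul_apply, Matrix.mul_apply]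
  have hL : ∀ v w : V, G.lapMatrix ℝ v w
      = (if v = w then (G.degree v : ℝ) else 0) - (if G.Adj v w then 1 else 0) := by
    intro v w
    simp [SimpleGraph.lapMatrix, SimpleGraph.degMatrix, Matrix.diagonal_apply]
  have hLk : ∀ C : {s : Finset V // s.card = k}, (tokenGraph G k).lapMatrix ℝ A C
      = (if A = C then (((tokenGraph G k).degree A : ℕ) : ℝ) else 0)
        - (if (tokenGraph G k).Adj A C then 1 else 0) := by
    intro C
    simp [SimpleGraph.lapMatrix, SimpleGraph.degMatrix, Matrix.diagonal_apply]
  simp only [hL, hLk, binMatrix]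
  -- compute LHS
  have hLHS : ∑ v : V, (if v ∈ A.1 then (1:ℝ) else 0) *
      ((if v = j then (G.degree v : ℝ) else 0) - (if G.Adj v j then 1 else 0))
      = (if j ∈ A.1 then (G.degree j : ℝ) else 0)
        - ∑ v ∈ A.1, (if G.Adj j v then 1 else 0) := by
    simp only [ite_mul, one_mul, zero_mul]
    rw [Finset.sum_ite_mem, Finset.univ_inter, Finset.sum_sub_distrib]
    congr 1
    · rw [Finset.sum_ite_eq' A.1 j (fun v => (G.degree v : ℝ))]
    · exact Finset.sum_congr rfl fun v _ => if_congr (G.adj_comm v j) rfl rfl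
  rw [hLHS]
  -- compute RHS
  have hdk : (((tokenGraph G k).degree A : ℕ) : ℝ)
      = ∑ a ∈ A.1, ∑ b ∈ A.1ᶜ, (if G.Adj a b then (1:ℝ) else 0) := by
    rw [SimpleGraph.degree_eq_sum_if_adj]
    exact sum_token_neighbors A (fun _ => (1:ℝ))
  have hRHS : ∑ C : {s : Finset V // s.card = k},
      ((if A = C then (((tokenGraph G k).degree A : ℕ) : ℝ) else 0)
        - (if (tokenGraph G k).Adj A C then 1 else 0)) * (if j ∈ C.1 then (1:ℝ) else 0)
      = (if j ∈ A.1 then (((tokenGraph G k).degree A : ℕ) : ℝ) else 0)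
        - ∑ a ∈ A.1, ∑ b ∈ A.1ᶜ,
            (if G.Adj a b then (if j ∈ insert b (A.1.erase a) then (1:ℝ) else 0) else 0) := by
    have hpt : ∀ C : {s : Finset V // s.card = k},
        ((if A = C then (((tokenGraph G k).degree A : ℕ) : ℝ) else 0)
          - (if (tokenGraph G k).Adj A C then 1 else 0)) * (if j ∈ C.1 then (1:ℝ) else 0)
        = (if A = C then (if j ∈ C.1 then (((tokenGraph G k).degree A : ℕ) : ℝ) else 0) else 0)
          - (if (tokenGraph G k).Adj A C then (if j ∈ C.1 then (1:ℝ) else 0) else 0) := by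
      intro C
      split_ifs <;> ring
    rw [Finset.sum_congr rfl fun C _ => hpt C, Finset.sum_sub_distrib]
    congr 1
    · rw [Finset.sum_ite_eq Finset.univ A
        (fun C : {s : Finset V // s.card = k} => if j ∈ C.1 then (((tokenGraph G k).degree A : ℕ) : ℝ) else 0)]
      simp only [Finset.mem_univ, if_true]
    · exact sum_token_neighbors A (fun s => if j ∈ s then (1:ℝ) else 0)
  rw [hRHS]
  by_cases hj : j ∈ A.1
  · rw [if_pos hj, if_pos hj, hdk, ← Finset.sum_sub_distrib]
    have hterm : ∀ a ∈ A.1, (∑ b ∈ A.1ᶜ, (if G.Adj a b then (1:ℝ) else 0))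
        - (∑ b ∈ A.1ᶜ, (if G.Adj a b then (if j ∈ insert b (A.1.erase a) then (1:ℝ) else 0) else 0))
        = if a = j then ∑ b ∈ A.1ᶜ, (if G.Adj j b then (1:ℝ) else 0) else 0 := by
      intro a ha
      rw [← Finset.sum_sub_distrib]
      by_cases haj : a = j
      · rw [if_pos haj]
        refine Finset.sum_congr rfl fun b hb => ?_
        have hjb : j ∉ insert b (A.1.erase a) := by
          simp only [Finset.mem_insert, Finset.mem_erase, not_or]
          exact ⟨fun h => (Finset.mem_compl.1 hb) (h ▸ hj), fun h => h.1 haj.symm⟩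
        rw [if_neg hjb, haj]
        split_ifs <;> ring
      · rw [if_neg haj]
        refine Finset.sum_eq_zero fun b hb => ?_
        have hjb : j ∈ insert b (A.1.erase a) :=
          Finset.mem_insert_of_mem (Finset.mem_erase.2 ⟨fun h => haj h.symm, hj⟩)
        rw [if_pos hjb]
        split_ifs <;> ring
    rw [Finset.sum_congr rfl hterm,
      Finset.sum_ite_eq' A.1 j (fun _ => ∑ b ∈ A.1ᶜ, (if G.Adj j b then (1:ℝ) else 0)),
      if_pos hj]
    have hsplit := Finset.sum_add_sum_compl A.1 (fun v => if G.Adj j v then (1:ℝ) else 0)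
    rw [SimpleGraph.degree_eq_sum_if_adj]
    linarith
  · rw [if_neg hj, if_neg hj, zero_sub, zero_sub, neg_inj]
    refine (Finset.sum_congr rfl fun a ha => ?_).symm
    have hterm : ∀ b ∈ A.1ᶜ, (if G.Adj a b then (if j ∈ insert b (A.1.erase a) then (1:ℝ) else 0) else 0)
        = if b = j then (if G.Adj a j then (1:ℝ) else 0) else 0 := by
      intro b hb
      by_cases hbj : b = j
      · rw [if_pos hbj, hbj, if_pos (Finset.mem_insert_self j (A.1.erase a))]
      · rw [if_neg hbj]
        have hjb : j ∉ insert b (A.1.erase a) := by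
          simp only [Finset.mem_insert, Finset.mem_erase, not_or]
          exact ⟨fun h => hbj h.symm, fun h => hj h.2⟩
        rw [if_neg hjb]
        split_ifs <;> ring
    rw [Finset.sum_congr rfl hterm,
      Finset.sum_ite_eq' A.1ᶜ j (fun _ => if G.Adj a j then (1:ℝ) else 0),
      if_pos (Finset.mem_compl.2 hj)]
    exact if_congr (G.adj_comm a j) rfl rfl
end

section
/- For any graph G with Laplacian L₁ and k-token graph Laplacian L_k, L₁ = (1/C(n-2,k-1))·Bᵀ·L_k·B, where B is the (n,k)-binomial matrix. -/
open Finset Matrix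

set_option linter.unusedSectionVars false
set_option linter.unusedVariables false

section Aux
variable {V : Type*} [Fintype V] [DecidableEq V]

lemma swap_card (A : Finset V) {a b : V} (ha : a ∈ A) (hb : b ∉ A) :
    (insert b (A.erase a)).card = A.card := by
  rw [Finset.card_insert_of_notMem fun h => hb (Finset.mem_of_mem_erase h),
    Finset.card_erase_of_mem ha]
  exact Nat.succ_pred_eq_of_pos (Finset.card_pos.mpr ⟨a, ha⟩)

lemma symmDiff_swap (A : Finset V) {a b : V} (ha : a ∈ A) (hb : b ∉ A) :
    symmDiff A (insert b (A.erase a)) = {a, b} := by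
  have hab : a ≠ b := fun h => hb (h ▸ ha)
  ext x
  simp only [Finset.mem_symmDiff, Finset.mem_insert, Finset.mem_erase, Finset.mem_singleton]
  by_cases hxa : x = a <;> by_cases hxb : x = b <;> simp_all

lemma swap_inj {A : Finset V} {a₁ b₁ a₂ b₂ : V} (ha₁ : a₁ ∈ A) (hb₁ : b₁ ∉ A)
    (ha₂ : a₂ ∈ A) (hb₂ : b₂ ∉ A)
    (h : insert b₁ (A.erase a₁) = insert b₂ (A.erase a₂)) : a₁ = a₂ ∧ b₁ = b₂ := by
  have hb : b₁ = b₂ := by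
    have h2 : b₂ ∈ insert b₁ (A.erase a₁) := h ▸ Finset.mem_insert_self _ _
    rcases Finset.mem_insert.mp h2 with h' | h'
    · exact h'.symm
    · exact absurd (Finset.mem_of_mem_erase h') hb₂
  subst hb
  refine ⟨?_, rfl⟩
  have h1 : a₁ ∉ insert b₁ (A.erase a₁) := by
    simp only [Finset.mem_insert, Finset.mem_erase]
    rintro (rfl | ⟨h', -⟩)
    · exact hb₁ ha₁
    · exact h' rfl
  rw [h] at h1
  simp only [Finset.mem_insert, Finset.mem_erase, not_or, not_and] at h1
  by_contra hne
  exact (h1.2 hne) ha₁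

variable {G : SimpleGraph V} {k : ℕ}

lemma tokenGraph_adj_iff {A B : {s : Finset V // s.card = k}} :
    (tokenGraph G k).Adj A B ↔
      ∃ a b, a ∈ A.1 ∧ b ∉ A.1 ∧ G.Adj a b ∧ B.1 = insert b (A.1.erase a) := by
  constructor
  · rintro ⟨a, b, ha, hb, hab, hd⟩
    have haB : a ∉ B.1 := by
      have : a ∈ symmDiff A.1 B.1 := by rw [hd]; simp
      rcases Finset.mem_symmDiff.mp this with h | h
      · exact h.2
      · exact absurd ha h.2
    have hbA : b ∉ A.1 := by
      have : b ∈ symmDiff A.1 B.1 := by rw [hd]; simp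
      rcases Finset.mem_symmDiff.mp this with h | h
      · exact absurd hb h.2
      · exact h.2
    refine ⟨a, b, ha, hbA, hab, ?_⟩
    ext x
    have hx := Finset.ext_iff.mp hd x
    simp only [Finset.mem_symmDiff, Finset.mem_insert, Finset.mem_singleton] at hx
    simp only [Finset.mem_insert, Finset.mem_erase]
    by_cases hxa : x = a <;> by_cases hxb : x = b <;> simp_all <;> tauto
  · rintro ⟨a, b, ha, hb, hab, hB⟩
    exact ⟨a, b, ha, by rw [hB]; exact Finset.mem_insert_self _ _, hab,
      by rw [hB]; exact symmDiff_swap A.1 ha hb⟩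

lemma neighbor_sum [DecidableRel G.Adj] (A : {s : Finset V // s.card = k}) (φ : Finset V → ℝ) :
    ∑ B : {s : Finset V // s.card = k}, (if (tokenGraph G k).Adj A B then φ B.1 else 0)
      = ∑ a ∈ A.1, ∑ b ∈ A.1ᶜ, (if G.Adj a b then φ (insert b (A.1.erase a)) else 0) := by
  classical
  rw [← Finset.sum_filter]
  have hrhs : ∑ a ∈ A.1, ∑ b ∈ A.1ᶜ, (if G.Adj a b then φ (insert b (A.1.erase a)) else 0)
      = ∑ p ∈ (A.1 ×ˢ A.1ᶜ).filter (fun p => G.Adj p.1 p.2), φ (insert p.2 (A.1.erase p.1)) := by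
    rw [Finset.sum_filter, Finset.sum_product]
  rw [hrhs]
  refine (Finset.sum_bij (fun p hp =>
      (⟨insert p.2 (A.1.erase p.1), ?_⟩ : {s : Finset V // s.card = k})) ?_ ?_ ?_ ?_).symm
  · obtain ⟨hp, -⟩ := Finset.mem_filter.mp hp
    obtain ⟨h1, h2⟩ := Finset.mem_product.mp hp
    rw [swap_card A.1 h1 (Finset.mem_compl.mp h2), A.2]
  · intro p hp
    obtain ⟨hp, hadj⟩ := Finset.mem_filter.mp hp
    obtain ⟨h1, h2⟩ := Finset.mem_product.mp hp
    refine Finset.mem_filter.mpr ⟨Finset.mem_univ _, ?_⟩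
    exact tokenGraph_adj_iff.mpr ⟨p.1, p.2, h1, Finset.mem_compl.mp h2, hadj, rfl⟩
  · intro p₁ hp₁ p₂ hp₂ h
    obtain ⟨hp₁, -⟩ := Finset.mem_filter.mp hp₁
    obtain ⟨h11, h12⟩ := Finset.mem_product.mp hp₁
    obtain ⟨hp₂, -⟩ := Finset.mem_filter.mp hp₂
    obtain ⟨h21, h22⟩ := Finset.mem_product.mp hp₂
    have := swap_inj h11 (Finset.mem_compl.mp h12) h21 (Finset.mem_compl.mp h22)
      (congrArg Subtype.val h)
    exact Prod.ext this.1 this.2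
  · intro B hB
    obtain ⟨-, hadj⟩ := Finset.mem_filter.mp hB
    obtain ⟨a, b, ha, hb, hab, hBeq⟩ := tokenGraph_adj_iff.mp hadj
    refine ⟨(a, b), Finset.mem_filter.mpr
      ⟨Finset.mem_product.mpr ⟨ha, Finset.mem_compl.mpr hb⟩, hab⟩, ?_⟩
    exact Subtype.ext hBeq.symm
  · intro p hp; rfl

end Aux

section Count
variable {V : Type*} [Fintype V] [DecidableEq V] {n k : ℕ}

lemma count_pair (hn : Fintype.card V = n) (hk1 : 1 ≤ k) {u w : V} (huw : u ≠ w) :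
    ∑ A : {s : Finset V // s.card = k}, (if u ∈ A.1 ∧ w ∉ A.1 then (1:ℝ) else 0)
      = (n - 2).choose (k - 1) := by
  classical
  rw [Finset.sum_boole]
  congr 1
  have hcard : (Finset.univ.filter (fun A : {s : Finset V // s.card = k} =>
      u ∈ A.1 ∧ w ∉ A.1)).card = (((Finset.univ.erase u).erase w).powersetCard (k-1)).card := by
    refine Finset.card_bij (fun A _ => A.1.erase u) ?_ ?_ ?_
    · intro A hA
      obtain ⟨-, hu, hw⟩ := Finset.mem_filter.mp hA
      refine Finset.mem_powersetCard.mpr ⟨?_, ?_⟩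
      · intro x hx
        obtain ⟨hxu, hxA⟩ := Finset.mem_erase.mp hx
        exact Finset.mem_erase.mpr ⟨fun h => hw (h ▸ hxA), Finset.mem_erase.mpr ⟨hxu, Finset.mem_univ _⟩⟩
      · rw [Finset.card_erase_of_mem hu, A.2]
    · intro A hA B hB h
      obtain ⟨-, huA, -⟩ := Finset.mem_filter.mp hA
      obtain ⟨-, huB, -⟩ := Finset.mem_filter.mp hB
      have h2 : A.1.erase u = B.1.erase u := h
      apply Subtype.ext
      rw [← Finset.insert_erase huA, ← Finset.insert_erase huB, h2]
    · intro s hs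
      obtain ⟨hsub, hscard⟩ := Finset.mem_powersetCard.mp hs
      have hus : u ∉ s := fun h => (Finset.mem_erase.mp (Finset.mem_erase.mp (hsub h)).2).1 rfl
      have hws : w ∉ s := fun h => (Finset.mem_erase.mp (hsub h)).1 rfl
      have hcard : (insert u s).card = k := by
        rw [Finset.card_insert_of_notMem hus, hscard]; omega
      refine ⟨⟨insert u s, hcard⟩, Finset.mem_filter.mpr ⟨Finset.mem_univ _,
        Finset.mem_insert_self _ _, ?_⟩, Finset.erase_insert hus⟩
      simp only [Finset.mem_insert, not_or]
      exact ⟨fun h => huw h.symm, hws⟩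
  rw [hcard, Finset.card_powersetCard]
  congr 2
  rw [Finset.card_erase_of_mem (Finset.mem_erase.mpr ⟨huw.symm, Finset.mem_univ _⟩),
    Finset.card_erase_of_mem (Finset.mem_univ _), Finset.card_univ, hn]
  omega

lemma count_swap {u v w : V} (huv : u ≠ v) (huw : u ≠ w) (hvw : v ≠ w) :
    ∑ A : {s : Finset V // s.card = k}, (if u ∈ A.1 ∧ v ∈ A.1 ∧ w ∉ A.1 then (1:ℝ) else 0)
      = ∑ A : {s : Finset V // s.card = k}, (if u ∈ A.1 ∧ w ∈ A.1 ∧ v ∉ A.1 then (1:ℝ) else 0) := by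
  classical
  rw [Finset.sum_boole, Finset.sum_boole]
  congr 1
  refine Finset.card_bij (fun A hA => (⟨insert w (A.1.erase v), ?_⟩ : {s : Finset V // s.card = k}))
    ?_ ?_ ?_
  · obtain ⟨-, -, hv, hw⟩ := Finset.mem_filter.mp hA
    rw [swap_card A.1 hv hw, A.2]
  · intro A hA
    obtain ⟨-, hu, hv, hw⟩ := Finset.mem_filter.mp hA
    refine Finset.mem_filter.mpr ⟨Finset.mem_univ _, ?_, ?_, ?_⟩
    · exact Finset.mem_insert.mpr (Or.inr (Finset.mem_erase.mpr ⟨huv, hu⟩))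
    · exact Finset.mem_insert_self _ _
    · simp only [Finset.mem_insert, not_or, Finset.mem_erase]
      exact ⟨hvw, fun h => h.1 rfl⟩
  · intro A hA B hB h
    obtain ⟨-, -, hvA, hwA⟩ := Finset.mem_filter.mp hA
    obtain ⟨-, -, hvB, hwB⟩ := Finset.mem_filter.mp hB
    have h' : insert w (A.1.erase v) = insert w (B.1.erase v) := congrArg Subtype.val h
    have hwa : w ∉ A.1.erase v := fun hc => hwA (Finset.mem_of_mem_erase hc)
    have hwb : w ∉ B.1.erase v := fun hc => hwB (Finset.mem_of_mem_erase hc)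
    have : A.1.erase v = B.1.erase v := by
      rw [← Finset.erase_insert hwa, ← Finset.erase_insert hwb, h']
    apply Subtype.ext
    rw [← Finset.insert_erase hvA, ← Finset.insert_erase hvB, this]
  · intro B hB
    obtain ⟨-, hu, hw, hv⟩ := Finset.mem_filter.mp hB
    have hvB : v ∉ B.1.erase w := fun hc => hv (Finset.mem_of_mem_erase hc)
    have hcard : (insert v (B.1.erase w)).card = k := by rw [swap_card B.1 hw hv, B.2]
    refine ⟨⟨insert v (B.1.erase w), hcard⟩, Finset.mem_filter.mpr ⟨Finset.mem_univ _, ?_, ?_, ?_⟩, ?_⟩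
    · exact Finset.mem_insert.mpr (Or.inr (Finset.mem_erase.mpr ⟨huw, hu⟩))
    · exact Finset.mem_insert_self _ _
    · simp only [Finset.mem_insert, not_or, Finset.mem_erase]
      exact ⟨fun h => hvw h.symm, fun h => h.1 rfl⟩
    · apply Subtype.ext
      simp only
      rw [Finset.erase_insert hvB, Finset.insert_erase hw]
end Count

section Entry
variable {V : Type*} [Fintype V] [DecidableEq V]

lemma deg_real {W : Type*} [Fintype W] (H : SimpleGraph W) [DecidableRel H.Adj] (x : W) :
    ((H.degree x : ℕ) : ℝ) = ∑ y, (if H.Adj x y then (1:ℝ) else 0) := by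
  rw [Finset.sum_boole]
  congr 1
  simp [SimpleGraph.degree, SimpleGraph.neighborFinset_eq_filter]

/-- The number (as a real) of `k`-subsets containing `u` and `x` but not `y`. -/
def cnt (V : Type*) [Fintype V] [DecidableEq V] (k : ℕ) (u x y : V) : ℝ :=
  ∑ A : {s : Finset V // s.card = k}, if u ∈ A.1 ∧ x ∈ A.1 ∧ y ∉ A.1 then (1:ℝ) else 0

variable {G : SimpleGraph V} [DecidableRel G.Adj] {k : ℕ}

lemma delta_diff {A : Finset V} {a b v : V} (ha : a ∈ A) (hb : b ∉ A) :
    (if v ∈ A then (1:ℝ) else 0) - (if v ∈ insert b (A.erase a) then 1 else 0)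
      = (if v = a then 1 else 0) - (if v = b then 1 else 0) := by
  by_cases hva : v = a <;> by_cases hvb : v = b <;> by_cases hvA : v ∈ A <;>
    simp_all [Finset.mem_insert, Finset.mem_erase]

lemma entry_eq (u v : V) :
    ((binMatrix V k)ᵀ * (tokenGraph G k).lapMatrix ℝ * binMatrix V k) u v
      = ∑ w : V, (if G.Adj v w then cnt V k u v w - cnt V k u w v else 0) := by
  classical
  have h0 : ((binMatrix V k)ᵀ * (tokenGraph G k).lapMatrix ℝ * binMatrix V k) u v
      = ∑ A : {s : Finset V // s.card = k}, ∑ B : {s : Finset V // s.card = k},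
          (if u ∈ A.1 then (1:ℝ) else 0) *
            ((tokenGraph G k).lapMatrix ℝ A B * (if v ∈ B.1 then (1:ℝ) else 0)) := by
    simp only [Matrix.mul_apply, Matrix.transpose_apply, Finset.sum_mul, mul_assoc, binMatrix]
    exact Finset.sum_comm
  have h1 : ∀ A : {s : Finset V // s.card = k},
      ∑ B : {s : Finset V // s.card = k},
          (tokenGraph G k).lapMatrix ℝ A B * (if v ∈ B.1 then (1:ℝ) else 0)
        = ∑ B : {s : Finset V // s.card = k}, (if (tokenGraph G k).Adj A B then
            ((if v ∈ A.1 then (1:ℝ) else 0) - (if v ∈ B.1 then 1 else 0)) else 0) := by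
    intro A
    have hstep : ∀ B : {s : Finset V // s.card = k},
        (tokenGraph G k).lapMatrix ℝ A B * (if v ∈ B.1 then (1:ℝ) else 0)
          = (if A = B then ((tokenGraph G k).degree A : ℝ) * (if v ∈ B.1 then 1 else 0) else 0)
            - (if (tokenGraph G k).Adj A B then (if v ∈ B.1 then (1:ℝ) else 0) else 0) := by
      intro B
      simp only [SimpleGraph.lapMatrix, Matrix.sub_apply, SimpleGraph.degMatrix,
        Matrix.diagonal_apply, SimpleGraph.adjMatrix_apply, sub_mul]
      congr 1
      · split_ifs <;> simp
      · split_ifs <;> simp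
    rw [Finset.sum_congr rfl (fun B _ => hstep B), Finset.sum_sub_distrib,
      Finset.sum_ite_eq]
    simp only [Finset.mem_univ, if_true]
    rw [deg_real (tokenGraph G k) A, Finset.sum_mul, ← Finset.sum_sub_distrib]
    apply Finset.sum_congr rfl
    intro B _
    by_cases h : (tokenGraph G k).Adj A B <;> simp [h]
  have h2 : ((binMatrix V k)ᵀ * (tokenGraph G k).lapMatrix ℝ * binMatrix V k) u v
      = ∑ A : {s : Finset V // s.card = k}, ∑ a ∈ A.1, ∑ b ∈ A.1ᶜ,
          (if u ∈ A.1 then (1:ℝ) else 0) *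
            (if G.Adj a b then ((if v = a then (1:ℝ) else 0) - (if v = b then 1 else 0)) else 0) := by
    rw [h0]
    apply Finset.sum_congr rfl
    intro A _
    rw [← Finset.mul_sum, h1 A,
      neighbor_sum A (fun s => (if v ∈ A.1 then (1:ℝ) else 0) - (if v ∈ s then 1 else 0)),
      Finset.mul_sum]
    apply Finset.sum_congr rfl
    intro a ha
    rw [Finset.mul_sum]
    apply Finset.sum_congr rfl
    intro b hb
    congr 1
    by_cases h : G.Adj a b
    · rw [if_pos h, if_pos h, delta_diff ha (Finset.mem_compl.mp hb)]
    · rw [if_neg h, if_neg h]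
  have hF : ∀ (A : {s : Finset V // s.card = k}), ∑ a ∈ A.1, ∑ b ∈ A.1ᶜ,
        (if u ∈ A.1 then (1:ℝ) else 0) *
          (if G.Adj a b then ((if v = a then (1:ℝ) else 0) - (if v = b then 1 else 0)) else 0)
      = ∑ a : V, ∑ b : V,
          (if a ∈ A.1 ∧ b ∉ A.1 ∧ G.Adj a b ∧ u ∈ A.1 then
            ((if v = a then (1:ℝ) else 0) - (if v = b then 1 else 0)) else 0) := by
    intro A
    rw [← Finset.sum_subset (Finset.subset_univ A.1) (fun a _ ha => Finset.sum_eq_zero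
      (fun b _ => if_neg (fun hc => ha hc.1)))]
    apply Finset.sum_congr rfl
    intro a ha
    rw [← Finset.sum_subset (Finset.subset_univ A.1ᶜ) (fun b _ hb => if_neg
      (fun hc => hb (Finset.mem_compl.mpr hc.2.1)))]
    apply Finset.sum_congr rfl
    intro b hb
    have hb' : b ∉ A.1 := Finset.mem_compl.mp hb
    by_cases h : G.Adj a b <;> by_cases hu : u ∈ A.1 <;> simp [h, hu, ha, hb']
  have h3 : ((binMatrix V k)ᵀ * (tokenGraph G k).lapMatrix ℝ * binMatrix V k) u v
      = ∑ a : V, ∑ b : V, ∑ A : {s : Finset V // s.card = k},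
          (if a ∈ A.1 ∧ b ∉ A.1 ∧ G.Adj a b ∧ u ∈ A.1 then
            ((if v = a then (1:ℝ) else 0) - (if v = b then 1 else 0)) else 0) := by
    rw [h2, Finset.sum_congr rfl (fun A _ => hF A), Finset.sum_comm]
    exact Finset.sum_congr rfl (fun a _ => Finset.sum_comm)
  have h4 : ∀ a b : V, (∑ A : {s : Finset V // s.card = k},
        (if a ∈ A.1 ∧ b ∉ A.1 ∧ G.Adj a b ∧ u ∈ A.1 then
          ((if v = a then (1:ℝ) else 0) - (if v = b then 1 else 0)) else 0))
      = if G.Adj a b then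
          ((if v = a then (1:ℝ) else 0) - (if v = b then 1 else 0)) * cnt V k u a b else 0 := by
    intro a b
    by_cases hab : G.Adj a b
    · rw [if_pos hab, cnt, Finset.mul_sum]
      apply Finset.sum_congr rfl
      intro A _
      rw [mul_ite, mul_one, mul_zero]
      exact if_congr (by tauto) rfl rfl
    · rw [if_neg hab]
      exact Finset.sum_eq_zero fun A _ => if_neg (fun hc => hab hc.2.2.1)
  rw [h3, Finset.sum_congr rfl (fun a _ => Finset.sum_congr rfl (fun b _ => h4 a b))]
  have h5 : ∀ a b : V, (if G.Adj a b then
        ((if v = a then (1:ℝ) else 0) - (if v = b then 1 else 0)) * cnt V k u a b else 0)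
      = (if v = a then (if G.Adj a b then cnt V k u a b else 0) else 0)
        - (if v = b then (if G.Adj a b then cnt V k u a b else 0) else 0) := by
    intro a b
    by_cases hab : G.Adj a b
    · have hne : a ≠ b := G.ne_of_adj hab
      by_cases hva : v = a <;> by_cases hvb : v = b <;>
        simp [hab, hva, hvb, hne, Ne.symm hne] <;> ring
    · simp [hab]
  rw [Finset.sum_congr rfl (fun a _ => Finset.sum_congr rfl (fun b _ => h5 a b))]
  simp only [Finset.sum_sub_distrib]
  have h6 : (∑ a : V, ∑ b : V, (if v = a then (if G.Adj a b then cnt V k u a b else 0) else 0))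
      = ∑ w : V, (if G.Adj v w then cnt V k u v w else 0) := by
    rw [Finset.sum_congr rfl (fun a (_ : a ∈ Finset.univ) =>
      show (∑ b : V, (if v = a then (if G.Adj a b then cnt V k u a b else 0) else 0))
        = if v = a then (∑ b : V, (if G.Adj a b then cnt V k u a b else 0)) else 0 from
      by by_cases h : v = a <;> simp [h]), Finset.sum_ite_eq]
    simp
  have h7 : (∑ a : V, ∑ b : V, (if v = b then (if G.Adj a b then cnt V k u a b else 0) else 0))
      = ∑ w : V, (if G.Adj w v then cnt V k u w v else 0) := by
    rw [Finset.sum_comm]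
    rw [Finset.sum_congr rfl (fun b (_ : b ∈ Finset.univ) =>
      show (∑ a : V, (if v = b then (if G.Adj a b then cnt V k u a b else 0) else 0))
        = if v = b then (∑ a : V, (if G.Adj a b then cnt V k u a b else 0)) else 0 from
      by by_cases h : v = b <;> simp [h]), Finset.sum_ite_eq]
    simp
  rw [h6, h7, ← Finset.sum_sub_distrib]
  apply Finset.sum_congr rfl
  intro w _
  by_cases h : G.Adj v w
  · rw [if_pos h, if_pos h.symm, if_pos h]
  · rw [if_neg h, if_neg (fun hc => h hc.symm), if_neg h, sub_zero]

end Entry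

theorem lap_eq_binMatrix_conj {V : Type*} [Fintype V] [DecidableEq V]
    (G : SimpleGraph V) [DecidableRel G.Adj] (n k : ℕ) (hn : Fintype.card V = n)
    (hk1 : 1 ≤ k) (hk : k ≤ n - 1) :
    G.lapMatrix ℝ =
      (1 / ((n - 2).choose (k - 1) : ℝ)) •
        ((binMatrix V k)ᵀ * (tokenGraph G k).lapMatrix ℝ * binMatrix V k) := by
  classical
  have hn2 : k - 1 ≤ n - 2 := by omega
  have hc : ((n - 2).choose (k - 1) : ℝ) ≠ 0 :=
    Nat.cast_ne_zero.mpr (Nat.choose_pos hn2).ne'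
  ext u v
  rw [Matrix.smul_apply, entry_eq, smul_eq_mul]
  have key : (∑ w : V, if G.Adj v w then cnt V k u v w - cnt V k u w v else 0)
      = ((n - 2).choose (k - 1) : ℝ) * G.lapMatrix ℝ u v := by
    by_cases huv : u = v
    · subst huv
      have hlap : G.lapMatrix ℝ u u = (G.degree u : ℝ) := by
        simp [SimpleGraph.lapMatrix, SimpleGraph.degMatrix, Matrix.sub_apply,
          Matrix.diagonal_apply, SimpleGraph.adjMatrix_apply]
      rw [hlap]
      have hthis : ∀ w : V, (if G.Adj u w then cnt V k u u w - cnt V k u w u else 0)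
          = if G.Adj u w then ((n - 2).choose (k - 1) : ℝ) else 0 := by
        intro w
        by_cases h : G.Adj u w
        · rw [if_pos h, if_pos h]
          have huw := G.ne_of_adj h
          have e1 : cnt V k u u w = ((n - 2).choose (k - 1) : ℝ) := by
            rw [cnt, ← count_pair hn hk1 huw]
            exact Finset.sum_congr rfl fun A _ => if_congr (by tauto) rfl rfl
          have e2 : cnt V k u w u = 0 :=
            Finset.sum_eq_zero fun A _ => if_neg (fun hc' => hc'.2.2 hc'.1)
          rw [e1, e2, sub_zero]
        · rw [if_neg h, if_neg h]
      rw [Finset.sum_congr rfl (fun w _ => hthis w), deg_real G u, Finset.mul_sum]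
      apply Finset.sum_congr rfl
      intro w _
      by_cases h : G.Adj u w <;> simp [h]
    · have hlap : G.lapMatrix ℝ u v = -(if G.Adj u v then (1:ℝ) else 0) := by
        simp [SimpleGraph.lapMatrix, SimpleGraph.degMatrix, Matrix.sub_apply,
          Matrix.diagonal_apply, SimpleGraph.adjMatrix_apply, huv]
      rw [hlap]
      rw [Finset.sum_eq_single u ?_ ?_]
      · have e1 : cnt V k u v u = 0 :=
          Finset.sum_eq_zero fun A _ => if_neg (fun hc' => hc'.2.2 hc'.1)
        have e2 : cnt V k u u v = ((n - 2).choose (k - 1) : ℝ) := by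
          rw [cnt, ← count_pair hn hk1 huv]
          exact Finset.sum_congr rfl fun A _ => if_congr (by tauto) rfl rfl
        rw [e1, e2]
        by_cases h : G.Adj u v
        · rw [if_pos h.symm, if_pos h]; ring
        · rw [if_neg (fun hc' => h hc'.symm), if_neg h]; ring
      · intro w _ hwu
        by_cases h : G.Adj v w
        · rw [if_pos h]
          have hvw := G.ne_of_adj h
          simp only [cnt]
          rw [count_swap huv (Ne.symm hwu) hvw, sub_self]
        · rw [if_neg h]
      · intro h
        exact absurd (Finset.mem_univ u) h
  rw [key, ← mul_assoc, one_div, inv_mul_cancel₀ hc, one_mul]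
end

section
/- For any graph G on n vertices with complement Ḡ, and any k, the Laplacian matrices L_k of F_k(G) and L̄_k of F_k(Ḡ) commute: L_k·L̄_k = L̄_k·L_k. -/
open Finset

open Matrix SimpleGraph
open scoped Classical

namespace TokenAux

variable {V : Type*} [DecidableEq V]

/-- Inclusion matrix from (k+1)-subsets to k-subsets. -/
noncomputable def incMat (V : Type*) [DecidableEq V] (k : ℕ) :
    Matrix {s : Finset V // s.card = k + 1} {s : Finset V // s.card = k} ℝ :=
  fun A T => if T.1 ⊆ A.1 then 1 else 0

lemma tokenGraph_adj_iff {G : SimpleGraph V} {k : ℕ} {A C : {s : Finset V // s.card = k}} :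
    (tokenGraph G k).Adj A C ↔
      ∃ a b, a ∈ A.1 ∧ b ∉ A.1 ∧ G.Adj a b ∧ C.1 = insert b (A.1.erase a) := by
  constructor
  · rintro ⟨a, b, ha, hb, hab, hd⟩
    have hd' : ∀ x, (x ∈ A.1 ∧ x ∉ C.1 ∨ x ∈ C.1 ∧ x ∉ A.1) ↔ (x = a ∨ x = b) := by
      intro x
      rw [← Finset.mem_symmDiff, hd, Finset.mem_insert, Finset.mem_singleton]
    have hne : a ≠ b := hab.ne
    have haC : a ∉ C.1 := by
      rcases (hd' a).mpr (Or.inl rfl) with h | h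
      · exact h.2
      · exact absurd ha h.2
    have hbA : b ∉ A.1 := by
      rcases (hd' b).mpr (Or.inr rfl) with h | h
      · exact absurd hb h.2
      · exact h.2
    refine ⟨a, b, ha, hbA, hab, ?_⟩
    ext x
    simp only [Finset.mem_insert, Finset.mem_erase]
    constructor
    · intro hxC
      by_cases hxA : x ∈ A.1
      · right; exact ⟨fun h => haC (h ▸ hxC), hxA⟩
      · rcases (hd' x).mp (Or.inr ⟨hxC, hxA⟩) with h | h
        · subst h; exact absurd ha hxA
        · left; exact h
    · rintro (rfl | ⟨hxa, hxA⟩)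
      · exact hb
      · by_contra hxC
        rcases (hd' x).mp (Or.inl ⟨hxA, hxC⟩) with h | h
        · exact hxa h
        · subst h; exact hbA hxA
  · rintro ⟨a, b, ha, hb, hab, hC⟩
    have hne : a ≠ b := hab.ne
    refine ⟨a, b, ha, ?_, hab, ?_⟩
    · rw [hC]; exact Finset.mem_insert_self _ _
    · ext x
      rw [Finset.mem_symmDiff]
      simp only [hC, Finset.mem_insert, Finset.mem_erase, Finset.mem_singleton]
      by_cases hxa : x = a <;> by_cases hxb : x = b <;>
        by_cases hxA : x ∈ A.1 <;> simp_all <;> tauto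

lemma insert_erase_inj {A : Finset V} {a a' b b' : V} (ha : a ∈ A) (ha' : a' ∈ A)
    (hb : b ∉ A) (hb' : b' ∉ A)
    (h : insert b (A.erase a) = insert b' (A.erase a')) : a = a' ∧ b = b' := by
  have hbb : b = b' := by
    have h1 : b ∈ insert b' (A.erase a') := h ▸ Finset.mem_insert_self b (A.erase a)
    rcases Finset.mem_insert.mp h1 with h2 | h2
    · exact h2
    · exact absurd (Finset.mem_of_mem_erase h2) hb
  subst hbb
  have he : A.erase a = A.erase a' := by
    have h1 : (insert b (A.erase a)).erase b = (insert b (A.erase a')).erase b := by rw [h]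
    rwa [Finset.erase_insert (fun hc => hb (Finset.mem_of_mem_erase hc)),
      Finset.erase_insert (fun hc => hb (Finset.mem_of_mem_erase hc))] at h1
  refine ⟨?_, rfl⟩
  by_contra hne
  exact (Finset.notMem_erase a' A) (he ▸ Finset.mem_erase.mpr ⟨fun hc => hne hc.symm, ha'⟩)

variable [Fintype V]

lemma card_insert_erase {k : ℕ} (A : {s : Finset V // s.card = k}) {a b : V}
    (ha : a ∈ A.1) (hb : b ∉ A.1) : (insert b (A.1.erase a)).card = k := by
  rw [Finset.card_insert_of_notMem (fun hc => hb (Finset.mem_of_mem_erase hc)),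
    Finset.card_erase_of_mem ha, A.2]
  exact Nat.succ_pred_eq_of_pos (by
    rcases Nat.eq_zero_or_pos k with h | h
    · exact absurd (Finset.card_eq_zero.mp (h ▸ A.2)) (Finset.ne_empty_of_mem ha)
    · exact h)

lemma sum_neighborFinset (G : SimpleGraph V) {k : ℕ} (A : {s : Finset V // s.card = k})
    (f : Finset V → ℝ) :
    ∑ C ∈ (tokenGraph G k).neighborFinset A, f C.1
      = ∑ p ∈ (A.1 ×ˢ A.1ᶜ).filter (fun p => G.Adj p.1 p.2),
          f (insert p.2 (A.1.erase p.1)) := by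
  refine (Finset.sum_bij (fun p hp => (⟨insert p.2 (A.1.erase p.1), ?_⟩ :
      {s : Finset V // s.card = k})) ?_ ?_ ?_ ?_).symm
  · simp only [Finset.mem_filter, Finset.mem_product, Finset.mem_compl] at hp
    exact card_insert_erase A hp.1.1 hp.1.2
  · intro p hp
    simp only [Finset.mem_filter, Finset.mem_product, Finset.mem_compl] at hp
    rw [SimpleGraph.mem_neighborFinset, tokenGraph_adj_iff]
    exact ⟨p.1, p.2, hp.1.1, hp.1.2, hp.2, rfl⟩
  · intro p hp q hq hpq
    simp only [Finset.mem_filter, Finset.mem_product, Finset.mem_compl] at hp hq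
    have h := insert_erase_inj hp.1.1 hq.1.1 hp.1.2 hq.1.2 (congrArg Subtype.val hpq)
    exact Prod.ext h.1 h.2
  · intro C hC
    rw [SimpleGraph.mem_neighborFinset, tokenGraph_adj_iff] at hC
    obtain ⟨a, b, ha, hb, hab, hCe⟩ := hC
    refine ⟨(a, b), ?_, ?_⟩
    · simp only [Finset.mem_filter, Finset.mem_product, Finset.mem_compl]
      exact ⟨⟨ha, hb⟩, hab⟩
    · exact Subtype.ext hCe.symm
  · intro p hp
    rfl

lemma degree_eq_card (G : SimpleGraph V) {k : ℕ} (A : {s : Finset V // s.card = k}) :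
    (tokenGraph G k).degree A = ((A.1 ×ˢ A.1ᶜ).filter (fun p => G.Adj p.1 p.2)).card := by
  have h := sum_neighborFinset G A (fun _ => (1 : ℝ))
  simp only [Finset.sum_const, nsmul_eq_mul, mul_one] at h
  exact_mod_cast (SimpleGraph.card_neighborFinset_eq_degree (tokenGraph G k) A) ▸
    Nat.cast_injective h

lemma lap_mulVec (G : SimpleGraph V) {k : ℕ} (g : {s : Finset V // s.card = k} → ℝ)
    (A : {s : Finset V // s.card = k}) (F : Finset V → ℝ)
    (hF : ∀ B : {s : Finset V // s.card = k}, F B.1 = g B) :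
    ((tokenGraph G k).lapMatrix ℝ *ᵥ g) A
      = ∑ p ∈ (A.1 ×ˢ A.1ᶜ).filter (fun p => G.Adj p.1 p.2),
          (F A.1 - F (insert p.2 (A.1.erase p.1))) := by
  rw [SimpleGraph.lapMatrix_mulVec_apply, Finset.sum_sub_distrib]
  congr 1
  · rw [Finset.sum_const, degree_eq_card, ← hF A, nsmul_eq_mul, mul_comm]
  · rw [← sum_neighborFinset G A F]
    exact Finset.sum_congr rfl (fun C _ => (hF C).symm)

lemma inc_mulVec {k : ℕ} (g : {s : Finset V // s.card = k} → ℝ)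
    (A : {s : Finset V // s.card = k + 1}) (F : Finset V → ℝ)
    (hF : ∀ B : {s : Finset V // s.card = k}, F B.1 = g B) :
    (incMat V k *ᵥ g) A = ∑ x ∈ A.1, F (A.1.erase x) := by
  have hstep : (incMat V k *ᵥ g) A
      = ∑ T ∈ Finset.univ.filter (fun T : {s : Finset V // s.card = k} => T.1 ⊆ A.1), g T := by
    rw [Matrix.mulVec, Finset.sum_filter]
    refine Finset.sum_congr rfl (fun T _ => ?_)
    simp only [incMat, dotProduct]
    split <;> simp_all
  rw [hstep]
  refine (Finset.sum_bij (fun (x : V) (hx : x ∈ A.1) =>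
      (⟨A.1.erase x, by simp [Finset.card_erase_of_mem hx, A.2]⟩ : {s : Finset V // s.card = k}))
      ?_ ?_ ?_ ?_).symm
  · intro x hx
    simp only [Finset.mem_filter, Finset.mem_univ, true_and]
    exact Finset.erase_subset _ _
  · intro x hx y hy hxy
    simp only [Subtype.mk.injEq] at hxy
    by_contra hne
    have hmem : y ∈ A.1.erase x := Finset.mem_erase.mpr ⟨fun hc => hne hc.symm, hy⟩
    rw [hxy] at hmem
    exact Finset.notMem_erase y A.1 hmem
  · intro T hT
    simp only [Finset.mem_filter, Finset.mem_univ, true_and] at hT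
    have hcard : (A.1 \ T.1).card = 1 := by
      rw [Finset.card_sdiff_of_subset hT, A.2, T.2, Nat.add_sub_cancel_left]
    obtain ⟨x, hx⟩ := Finset.card_eq_one.mp hcard
    have hxmem := Finset.mem_sdiff.mp (hx ▸ Finset.mem_singleton_self x)
    refine ⟨x, hxmem.1, ?_⟩
    apply Subtype.ext
    have hsub : T.1 ⊆ A.1.erase x :=
      fun t ht => Finset.mem_erase.mpr ⟨fun hc => hxmem.2 (hc ▸ ht), hT ht⟩
    exact (Finset.eq_of_subset_of_card_le hsub
      (by simp [Finset.card_erase_of_mem hxmem.1, A.2, T.2])).symm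
  · intro x hx
    exact hF ⟨A.1.erase x, by simp [Finset.card_erase_of_mem hx, A.2]⟩

lemma key_sum (G : SimpleGraph V) (A : Finset V) (f : Finset V → ℝ) :
    ∑ p ∈ (A ×ˢ Aᶜ).filter (fun p => G.Adj p.1 p.2),
      ((∑ x ∈ A, f (A.erase x)) -
        ∑ y ∈ insert p.2 (A.erase p.1), f ((insert p.2 (A.erase p.1)).erase y))
    = ∑ x ∈ A, ∑ p ∈ ((A.erase x) ×ˢ (A.erase x)ᶜ).filter (fun p => G.Adj p.1 p.2),
        (f (A.erase x) - f (insert p.2 ((A.erase x).erase p.1))) := by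
  classical
  set T : V → V → V → ℝ :=
    fun x a b => f (A.erase x) - f (insert b ((A.erase x).erase a)) with hT
  have herase : ∀ (s : Finset V) (a : V) (u : V → ℝ),
      ∑ x ∈ s.erase a, u x = ∑ x ∈ s, if x ≠ a then u x else 0 := by
    intro s a u
    rw [← Finset.filter_ne', Finset.sum_filter]
  -- the inner difference simplification
  have hinner : ∀ a ∈ A, ∀ b ∈ Aᶜ,
      ((∑ x ∈ A, f (A.erase x)) -
        ∑ y ∈ insert b (A.erase a), f ((insert b (A.erase a)).erase y))
      = ∑ x ∈ A.erase a, T x a b := by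
    intro a ha b hb
    rw [Finset.mem_compl] at hb
    have hbe : b ∉ A.erase a := fun hc => hb (Finset.mem_of_mem_erase hc)
    rw [Finset.sum_insert hbe, Finset.erase_insert hbe,
      ← Finset.add_sum_erase A (fun x => f (A.erase x)) ha]
    have hrest : ∀ y ∈ A.erase a,
        f ((insert b (A.erase a)).erase y) = f (insert b ((A.erase y).erase a)) := by
      intro y hy
      have hyb : y ≠ b := fun hc => hb (hc ▸ Finset.mem_of_mem_erase hy)
      rw [Finset.erase_insert_of_ne hyb.symm, Finset.erase_right_comm]
    rw [Finset.sum_congr rfl hrest, hT, Finset.sum_sub_distrib]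
    ring
  -- normalize LHS
  have hL : ∑ p ∈ (A ×ˢ Aᶜ).filter (fun p => G.Adj p.1 p.2),
      ((∑ x ∈ A, f (A.erase x)) -
        ∑ y ∈ insert p.2 (A.erase p.1), f ((insert p.2 (A.erase p.1)).erase y))
      = ∑ x ∈ A, ∑ a ∈ A, ∑ b ∈ Aᶜ, if a ≠ x ∧ G.Adj a b then T x a b else 0 := by
    calc ∑ p ∈ (A ×ˢ Aᶜ).filter (fun p => G.Adj p.1 p.2),
        ((∑ x ∈ A, f (A.erase x)) -
          ∑ y ∈ insert p.2 (A.erase p.1), f ((insert p.2 (A.erase p.1)).erase y))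
        = ∑ p ∈ (A ×ˢ Aᶜ).filter (fun p => G.Adj p.1 p.2), ∑ x ∈ A.erase p.1, T x p.1 p.2 := by
          refine Finset.sum_congr rfl fun p hp => ?_
          simp only [Finset.mem_filter, Finset.mem_product] at hp
          exact hinner p.1 hp.1.1 p.2 hp.1.2
      _ = ∑ a ∈ A, ∑ b ∈ Aᶜ, ∑ x ∈ A, if x ≠ a ∧ G.Adj a b then T x a b else 0 := by
          rw [Finset.sum_filter, Finset.sum_product]
          refine Finset.sum_congr rfl fun a _ => Finset.sum_congr rfl fun b _ => ?_
          by_cases h : G.Adj a b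
          · rw [if_pos h, herase]
            exact Finset.sum_congr rfl fun x _ => by simp [h]
          · rw [if_neg h]
            simp [h]
      _ = ∑ a ∈ A, ∑ x ∈ A, ∑ b ∈ Aᶜ, if x ≠ a ∧ G.Adj a b then T x a b else 0 :=
          Finset.sum_congr rfl fun a _ => Finset.sum_comm
      _ = ∑ x ∈ A, ∑ a ∈ A, ∑ b ∈ Aᶜ, if x ≠ a ∧ G.Adj a b then T x a b else 0 :=
          Finset.sum_comm
      _ = ∑ x ∈ A, ∑ a ∈ A, ∑ b ∈ Aᶜ, if a ≠ x ∧ G.Adj a b then T x a b else 0 := by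
          refine Finset.sum_congr rfl fun x _ => Finset.sum_congr rfl fun a _ =>
            Finset.sum_congr rfl fun b _ => if_congr (and_congr_left' ne_comm) rfl rfl
  -- normalize RHS
  have hsplit : ∀ x ∈ A,
      ∑ p ∈ ((A.erase x) ×ˢ (A.erase x)ᶜ).filter (fun p => G.Adj p.1 p.2),
        (f (A.erase x) - f (insert p.2 ((A.erase x).erase p.1)))
      = (∑ a ∈ A.erase x, if G.Adj a x then T x a x else 0)
        + ∑ a ∈ A.erase x, ∑ b ∈ Aᶜ, if G.Adj a b then T x a b else 0 := by
    intro x hx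
    rw [Finset.sum_filter, Finset.sum_product, Finset.compl_erase, ← Finset.sum_add_distrib]
    refine Finset.sum_congr rfl fun a _ => ?_
    rw [Finset.sum_insert (fun hc => (Finset.mem_compl.mp hc) hx)]
  have hR : ∑ x ∈ A, ∑ p ∈ ((A.erase x) ×ˢ (A.erase x)ᶜ).filter (fun p => G.Adj p.1 p.2),
        (f (A.erase x) - f (insert p.2 ((A.erase x).erase p.1)))
      = (∑ x ∈ A, ∑ a ∈ A.erase x, if G.Adj a x then T x a x else 0)
        + ∑ x ∈ A, ∑ a ∈ A, ∑ b ∈ Aᶜ, if a ≠ x ∧ G.Adj a b then T x a b else 0 := by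
    rw [← Finset.sum_add_distrib]
    refine Finset.sum_congr rfl fun x hx => ?_
    rw [hsplit x hx]
    congr 1
    rw [herase]
    refine Finset.sum_congr rfl fun a _ => ?_
    by_cases h1 : a ≠ x
    · rw [if_pos h1]
      exact Finset.sum_congr rfl fun b _ => by simp [h1]
    · rw [if_neg h1]
      simp [h1]
  -- the diagonal part vanishes by antisymmetry
  have hTxx : ∀ x ∈ A, ∀ a ∈ A.erase x, T x a x = f (A.erase x) - f (A.erase a) := by
    intro x hx a ha
    have hax : a ≠ x := (Finset.mem_erase.mp ha).1
    rw [hT]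
    simp only
    rw [Finset.erase_right_comm,
      Finset.insert_erase (Finset.mem_erase.mpr ⟨fun hc => hax hc.symm, hx⟩)]
  have hZ : (∑ x ∈ A, ∑ a ∈ A.erase x, if G.Adj a x then T x a x else 0)
      = ∑ x ∈ A, ∑ a ∈ A, if a ≠ x ∧ G.Adj a x then f (A.erase x) - f (A.erase a) else 0 := by
    refine Finset.sum_congr rfl fun x hx => ?_
    rw [herase]
    refine Finset.sum_congr rfl fun a ha => ?_
    by_cases h1 : a ≠ x
    · by_cases h2 : G.Adj a x
      · rw [if_pos h1, if_pos h2, if_pos ⟨h1, h2⟩]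
        exact hTxx x hx a (Finset.mem_erase.mpr ⟨h1, ha⟩)
      · rw [if_pos h1, if_neg h2, if_neg (fun hc => h2 hc.2)]
    · rw [if_neg h1, if_neg (fun hc => h1 hc.1)]
  have hZ0 : (∑ x ∈ A, ∑ a ∈ A, if a ≠ x ∧ G.Adj a x then f (A.erase x) - f (A.erase a) else 0)
      = 0 := by
    have hneg : (∑ x ∈ A, ∑ a ∈ A, if a ≠ x ∧ G.Adj a x then f (A.erase x) - f (A.erase a) else 0)
        = -∑ x ∈ A, ∑ a ∈ A, if a ≠ x ∧ G.Adj a x then f (A.erase x) - f (A.erase a) else 0 := by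
      conv_lhs => rw [Finset.sum_comm]
      rw [← Finset.sum_neg_distrib]
      refine Finset.sum_congr rfl fun y _ => ?_
      rw [← Finset.sum_neg_distrib]
      refine Finset.sum_congr rfl fun z _ => ?_
      by_cases h1 : y = z
      · simp [h1]
      · by_cases h2 : G.Adj y z
        · rw [if_pos ⟨h1, h2⟩, if_pos ⟨fun hc => h1 hc.symm, (G.adj_comm y z).mp h2⟩, neg_sub]
        · rw [if_neg (fun hc => h2 hc.2), if_neg (fun hc => h2 ((G.adj_comm z y).mp hc.2)),
            neg_zero]
    linarith
  rw [hL, hR, hZ, hZ0, zero_add]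

lemma lap_mul_inc (G : SimpleGraph V) (k : ℕ) :
    (tokenGraph G (k+1)).lapMatrix ℝ * incMat V k
      = incMat V k * (tokenGraph G k).lapMatrix ℝ := by
  have hvec : ∀ g : {s : Finset V // s.card = k} → ℝ,
      ((tokenGraph G (k+1)).lapMatrix ℝ * incMat V k) *ᵥ g
        = (incMat V k * (tokenGraph G k).lapMatrix ℝ) *ᵥ g := by
    intro g
    set F : Finset V → ℝ := fun s => if h : s.card = k then g ⟨s, h⟩ else 0 with hFdef
    have hF : ∀ B : {s : Finset V // s.card = k}, F B.1 = g B := by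
      intro B
      simp [hFdef, B.2]
    funext A
    rw [← Matrix.mulVec_mulVec, ← Matrix.mulVec_mulVec]
    rw [lap_mulVec G (incMat V k *ᵥ g) A (fun s => ∑ x ∈ s, F (s.erase x))
        (fun B => (inc_mulVec g B F hF).symm)]
    rw [inc_mulVec ((tokenGraph G k).lapMatrix ℝ *ᵥ g) A
        (fun s => ∑ p ∈ (s ×ˢ sᶜ).filter (fun p => G.Adj p.1 p.2),
          (F s - F (insert p.2 (s.erase p.1))))
        (fun B => (lap_mulVec G g B F hF).symm)]
    exact key_sum G A.1 F
  ext A S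
  have h := congrFun (hvec (Pi.single S 1)) A
  simpa only [Matrix.mulVec_single_one, Matrix.col_apply] using h

lemma card_filter_subsets (k : ℕ) (A : {s : Finset V // s.card = k + 1}) :
    (Finset.univ.filter
      (fun T : {s : Finset V // s.card = k} => T.1 ⊆ A.1)).card = k + 1 := by
  have h : A.1.card = (Finset.univ.filter
      (fun T : {s : Finset V // s.card = k} => T.1 ⊆ A.1)).card :=
    Finset.card_bij (fun (x : V) (hx : x ∈ A.1) =>
      (⟨A.1.erase x, by simp [Finset.card_erase_of_mem hx, A.2]⟩ : {s : Finset V // s.card = k}))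
      (fun x hx => by
        simp only [Finset.mem_filter, Finset.mem_univ, true_and]
        exact Finset.erase_subset _ _)
      (fun x hx y hy hxy => by
        simp only [Subtype.mk.injEq] at hxy
        by_contra hne
        have hmem : y ∈ A.1.erase x := Finset.mem_erase.mpr ⟨fun hc => hne hc.symm, hy⟩
        rw [hxy] at hmem
        exact Finset.notMem_erase y A.1 hmem)
      (fun T hT => by
        simp only [Finset.mem_filter, Finset.mem_univ, true_and] at hT
        have hcard : (A.1 \ T.1).card = 1 := by
          rw [Finset.card_sdiff_of_subset hT, A.2, T.2, Nat.add_sub_cancel_left]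
        obtain ⟨x, hx⟩ := Finset.card_eq_one.mp hcard
        have hxmem := Finset.mem_sdiff.mp (hx ▸ Finset.mem_singleton_self x)
        refine ⟨x, hxmem.1, ?_⟩
        apply Subtype.ext
        have hsub : T.1 ⊆ A.1.erase x :=
          fun t ht => Finset.mem_erase.mpr ⟨fun hc => hxmem.2 (hc ▸ ht), hT ht⟩
        exact (Finset.eq_of_subset_of_card_le hsub
          (by simp [Finset.card_erase_of_mem hxmem.1, A.2, T.2])).symm)
  rw [← h, A.2]

lemma inc_mul_inc_transpose (k : ℕ) :
    incMat V k * (incMat V k)ᵀ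
      = (tokenGraph (⊤ : SimpleGraph V) (k+1)).adjMatrix ℝ
        + ((k : ℝ) + 1) • (1 : Matrix _ _ ℝ) := by
  ext A C
  rw [Matrix.mul_apply]
  have hterm : ∀ T : {s : Finset V // s.card = k},
      incMat V k A T * (incMat V k)ᵀ T C
        = if T.1 ⊆ A.1 ∧ T.1 ⊆ C.1 then 1 else 0 := by
    intro T
    simp only [incMat, Matrix.transpose_apply]
    by_cases h1 : T.1 ⊆ A.1 <;> by_cases h2 : T.1 ⊆ C.1 <;> simp [h1, h2]
  rw [Finset.sum_congr rfl (fun T _ => hterm T), Finset.sum_boole]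
  simp only [Matrix.add_apply, Matrix.smul_apply, Matrix.one_apply,
    SimpleGraph.adjMatrix_apply, smul_eq_mul]
  by_cases hAC : A = C
  · subst hAC
    rw [if_pos rfl, if_neg ((tokenGraph (⊤ : SimpleGraph V) (k+1)).irrefl)]
    have hone : (Finset.univ.filter
        (fun T : {s : Finset V // s.card = k} => T.1 ⊆ A.1 ∧ T.1 ⊆ A.1))
        = Finset.univ.filter (fun T : {s : Finset V // s.card = k} => T.1 ⊆ A.1) := by
      simp only [and_self]
    rw [hone, card_filter_subsets k A]
    push_cast
    ring
  · rw [if_neg hAC, mul_zero, add_zero]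
    by_cases hadj : (tokenGraph (⊤ : SimpleGraph V) (k+1)).Adj A C
    · rw [if_pos hadj]
      rw [tokenGraph_adj_iff] at hadj
      obtain ⟨a, b, ha, hb, hab, hC⟩ := hadj
      have hne : a ≠ b := hab.ne
      have haC : a ∉ C.1 := by
        rw [hC]
        intro hc
        rcases Finset.mem_insert.mp hc with h | h
        · exact hne h
        · exact Finset.notMem_erase a A.1 h
      have hfil : (Finset.univ.filter
          (fun T : {s : Finset V // s.card = k} => T.1 ⊆ A.1 ∧ T.1 ⊆ C.1))
          = {⟨A.1.erase a, by simp [Finset.card_erase_of_mem ha, A.2]⟩} := by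
        ext T
        simp only [Finset.mem_filter, Finset.mem_univ, true_and, Finset.mem_singleton]
        constructor
        · rintro ⟨h1, h2⟩
          apply Subtype.ext
          have hsub : T.1 ⊆ A.1.erase a :=
            fun t ht => Finset.mem_erase.mpr ⟨fun hc => haC (by rw [← hc]; exact h2 ht), h1 ht⟩
          exact Finset.eq_of_subset_of_card_le hsub
            (by simp [Finset.card_erase_of_mem ha, A.2, T.2])
        · rintro rfl
          refine ⟨Finset.erase_subset _ _, ?_⟩
          rw [hC]
          exact Finset.subset_insert _ _
      rw [hfil, Finset.card_singleton, Nat.cast_one]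
    · rw [if_neg hadj]
      have hfil : (Finset.univ.filter
          (fun T : {s : Finset V // s.card = k} => T.1 ⊆ A.1 ∧ T.1 ⊆ C.1)) = ∅ := by
        rw [Finset.filter_eq_empty_iff]
        rintro T _ ⟨h1, h2⟩
        have hsub : T.1 ⊆ A.1 ∩ C.1 := Finset.subset_inter h1 h2
        have hk : k ≤ (A.1 ∩ C.1).card :=
          le_trans (le_of_eq T.2.symm) (Finset.card_le_card hsub)
        have hlt : (A.1 ∩ C.1).card < k + 1 := by
          by_contra hcon
          push_neg at hcon
          have h3 : A.1 ∩ C.1 = A.1 := Finset.eq_of_subset_of_card_le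
            Finset.inter_subset_left (by rw [A.2]; exact hcon)
          have h4 : A.1 ∩ C.1 = C.1 := Finset.eq_of_subset_of_card_le
            Finset.inter_subset_right (by rw [C.2]; exact hcon)
          exact hAC (Subtype.ext (h3 ▸ h4))
        have hcard : (A.1 ∩ C.1).card = k := le_antisymm (Nat.lt_succ_iff.mp hlt) hk
        have h1' : (A.1 \ (A.1 ∩ C.1)).card = 1 := by
          rw [Finset.card_sdiff_of_subset Finset.inter_subset_left, A.2, hcard, Nat.add_sub_cancel_left]
        have h2' : (C.1 \ (A.1 ∩ C.1)).card = 1 := by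
          rw [Finset.card_sdiff_of_subset Finset.inter_subset_right, C.2, hcard, Nat.add_sub_cancel_left]
        obtain ⟨a, hae⟩ := Finset.card_eq_one.mp h1'
        obtain ⟨b, hbe⟩ := Finset.card_eq_one.mp h2'
        have hamem := Finset.mem_sdiff.mp (hae ▸ Finset.mem_singleton_self a)
        have hbmem := Finset.mem_sdiff.mp (hbe ▸ Finset.mem_singleton_self b)
        have hbA : b ∉ A.1 := fun hc => hbmem.2 (Finset.mem_inter.mpr ⟨hc, hbmem.1⟩)
        have haC2 : a ∉ C.1 := fun hc => hamem.2 (Finset.mem_inter.mpr ⟨hamem.1, hc⟩)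
        apply hadj
        rw [tokenGraph_adj_iff]
        refine ⟨a, b, hamem.1, hbA, (SimpleGraph.top_adj a b).mpr
          (fun hc => haC2 (hc ▸ hbmem.1)), ?_⟩
        have hAe : A.1.erase a = A.1 ∩ C.1 := by
          ext x
          simp only [Finset.mem_erase, Finset.mem_inter]
          constructor
          · rintro ⟨hxa, hxA⟩
            refine ⟨hxA, ?_⟩
            by_contra hxC
            have : x ∈ A.1 \ (A.1 ∩ C.1) :=
              Finset.mem_sdiff.mpr ⟨hxA, fun hc => hxC (Finset.mem_inter.mp hc).2⟩
            rw [hae, Finset.mem_singleton] at this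
            exact hxa this
          · rintro ⟨hxA, hxC⟩
            exact ⟨fun hc => haC2 (hc ▸ hxC), hxA⟩
        rw [hAe]
        ext x
        simp only [Finset.mem_insert, Finset.mem_inter]
        constructor
        · intro hxC
          by_cases hxI : x ∈ A.1 ∩ C.1
          · right; exact Finset.mem_inter.mp hxI
          · left
            have : x ∈ C.1 \ (A.1 ∩ C.1) := Finset.mem_sdiff.mpr ⟨hxC, hxI⟩
            rw [hbe, Finset.mem_singleton] at this
            exact this
        · rintro (rfl | ⟨_, hxC⟩)
          · exact hbmem.1
          · exact hxC
      rw [hfil, Finset.card_empty, Nat.cast_zero]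

lemma degree_token_top (k : ℕ) (A : {s : Finset V // s.card = k}) :
    (tokenGraph (⊤ : SimpleGraph V) k).degree A = k * (Fintype.card V - k) := by
  rw [degree_eq_card]
  have htop : @Finset.filter (V × V) (fun p => (⊤ : SimpleGraph V).Adj p.1 p.2)
      (fun a => Classical.propDecidable ((⊤ : SimpleGraph V).Adj a.1 a.2))
      (A.1 ×ˢ A.1ᶜ) = A.1 ×ˢ A.1ᶜ := by
    apply (config := { synthAssignedInstances := false }) Finset.filter_true_of_mem
    intro p hp
    simp only [Finset.mem_product, Finset.mem_compl] at hp
    exact (SimpleGraph.top_adj p.1 p.2).mpr (fun hc => hp.2 (hc ▸ hp.1))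
  rw [htop, Finset.card_product, Finset.card_compl, A.2]

lemma lap_comm_top (G : SimpleGraph V) (k : ℕ) :
    (tokenGraph G (k+1)).lapMatrix ℝ * (tokenGraph (⊤ : SimpleGraph V) (k+1)).lapMatrix ℝ
      = (tokenGraph (⊤ : SimpleGraph V) (k+1)).lapMatrix ℝ * (tokenGraph G (k+1)).lapMatrix ℝ := by
  have hdeg : (tokenGraph (⊤ : SimpleGraph V) (k+1)).degMatrix ℝ
      = ((((k+1) * (Fintype.card V - (k+1)) : ℕ) : ℝ)) • (1 : Matrix _ _ ℝ) := by
    ext A C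
    simp only [SimpleGraph.degMatrix, Matrix.diagonal_apply, Matrix.smul_apply,
      Matrix.one_apply, smul_eq_mul]
    by_cases h : A = C <;> simp [h, degree_token_top]
  have hadj : (tokenGraph (⊤ : SimpleGraph V) (k+1)).adjMatrix ℝ
      = incMat V k * (incMat V k)ᵀ - ((k : ℝ) + 1) • (1 : Matrix _ _ ℝ) := by
    rw [inc_mul_inc_transpose]
    abel
  have hcomm : (tokenGraph G (k+1)).lapMatrix ℝ * (incMat V k * (incMat V k)ᵀ)
      = (incMat V k * (incMat V k)ᵀ) * (tokenGraph G (k+1)).lapMatrix ℝ := by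
    have h1 : (tokenGraph G (k+1)).lapMatrix ℝ * (incMat V k * (incMat V k)ᵀ)
        = incMat V k * ((tokenGraph G k).lapMatrix ℝ * (incMat V k)ᵀ) := by
      rw [← Matrix.mul_assoc, lap_mul_inc, Matrix.mul_assoc]
    have hsymm : (incMat V k * ((tokenGraph G k).lapMatrix ℝ * (incMat V k)ᵀ))ᵀ
        = incMat V k * ((tokenGraph G k).lapMatrix ℝ * (incMat V k)ᵀ) := by
      rw [Matrix.transpose_mul, Matrix.transpose_mul, Matrix.transpose_transpose,
        (SimpleGraph.isSymm_lapMatrix _ _).eq, Matrix.mul_assoc]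
    have h2 : ((tokenGraph G (k+1)).lapMatrix ℝ * (incMat V k * (incMat V k)ᵀ))ᵀ
        = (incMat V k * (incMat V k)ᵀ) * (tokenGraph G (k+1)).lapMatrix ℝ := by
      rw [Matrix.transpose_mul, (SimpleGraph.isSymm_lapMatrix _ _).eq, Matrix.transpose_mul,
        Matrix.transpose_transpose]
    calc (tokenGraph G (k+1)).lapMatrix ℝ * (incMat V k * (incMat V k)ᵀ)
        = incMat V k * ((tokenGraph G k).lapMatrix ℝ * (incMat V k)ᵀ) := h1
      _ = (incMat V k * ((tokenGraph G k).lapMatrix ℝ * (incMat V k)ᵀ))ᵀ := hsymm.symm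
      _ = ((tokenGraph G (k+1)).lapMatrix ℝ * (incMat V k * (incMat V k)ᵀ))ᵀ := by rw [h1]
      _ = (incMat V k * (incMat V k)ᵀ) * (tokenGraph G (k+1)).lapMatrix ℝ := h2
  have e1 : ∀ (α : ℝ) (X : Matrix {s : Finset V // s.card = k+1}
      {s : Finset V // s.card = k+1} ℝ), X * (α • (1 : Matrix _ _ ℝ)) = α • X := by
    intro α X
    rw [Matrix.mul_smul, Matrix.mul_one]
  have e2 : ∀ (α : ℝ) (X : Matrix {s : Finset V // s.card = k+1}
      {s : Finset V // s.card = k+1} ℝ), (α • (1 : Matrix _ _ ℝ)) * X = α • X := by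
    intro α X
    rw [Matrix.smul_mul, Matrix.one_mul]
  have hlap : (tokenGraph (⊤ : SimpleGraph V) (k+1)).lapMatrix ℝ
      = ((((k+1) * (Fintype.card V - (k+1)) : ℕ) : ℝ)) • (1 : Matrix _ _ ℝ)
        - (incMat V k * (incMat V k)ᵀ - ((k : ℝ) + 1) • (1 : Matrix _ _ ℝ)) := by
    rw [SimpleGraph.lapMatrix, hdeg, hadj]
  rw [hlap, Matrix.mul_sub, Matrix.sub_mul, Matrix.mul_sub, Matrix.sub_mul]
  simp only [e1, e2]
  rw [hcomm]

lemma token_adj_top_iff (G : SimpleGraph V) {k : ℕ} {A C : {s : Finset V // s.card = k}} :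
    (tokenGraph (⊤ : SimpleGraph V) k).Adj A C ↔
      ((tokenGraph G k).Adj A C ∨ (tokenGraph Gᶜ k).Adj A C) := by
  rw [tokenGraph_adj_iff, tokenGraph_adj_iff, tokenGraph_adj_iff]
  constructor
  · rintro ⟨a, b, ha, hb, hab, hC⟩
    by_cases h : G.Adj a b
    · exact Or.inl ⟨a, b, ha, hb, h, hC⟩
    · exact Or.inr ⟨a, b, ha, hb, (SimpleGraph.compl_adj G a b).mpr ⟨hab.ne, h⟩, hC⟩
  · rintro (⟨a, b, ha, hb, hab, hC⟩ | ⟨a, b, ha, hb, hab, hC⟩)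
    · exact ⟨a, b, ha, hb, (SimpleGraph.top_adj a b).mpr hab.ne, hC⟩
    · exact ⟨a, b, ha, hb, (SimpleGraph.top_adj a b).mpr hab.ne, hC⟩

lemma token_adj_not_both (G : SimpleGraph V) {k : ℕ} {A C : {s : Finset V // s.card = k}}
    (h1 : (tokenGraph G k).Adj A C) : ¬ (tokenGraph Gᶜ k).Adj A C := by
  rw [tokenGraph_adj_iff] at h1
  obtain ⟨a, b, ha, hb, hab, hC⟩ := h1
  rw [tokenGraph_adj_iff]
  rintro ⟨a', b', ha', hb', hab', hC'⟩
  obtain ⟨he1, he2⟩ := insert_erase_inj ha ha' hb hb' (hC.symm.trans hC')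
  subst he1; subst he2
  exact ((SimpleGraph.compl_adj G a b).mp hab').2 hab

lemma lap_add_compl (G : SimpleGraph V) (k : ℕ) :
    (tokenGraph G k).lapMatrix ℝ + (tokenGraph Gᶜ k).lapMatrix ℝ
      = (tokenGraph (⊤ : SimpleGraph V) k).lapMatrix ℝ := by
  ext A C
  simp only [SimpleGraph.lapMatrix, Matrix.sub_apply, Matrix.add_apply,
    SimpleGraph.degMatrix, Matrix.diagonal_apply, SimpleGraph.adjMatrix_apply]
  by_cases h : A = C
  · subst h
    have hdeg : (tokenGraph G k).degree A + (tokenGraph Gᶜ k).degree A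
        = (tokenGraph (⊤ : SimpleGraph V) k).degree A := by
      have htop : @Finset.filter (V × V) (fun p => (⊤ : SimpleGraph V).Adj p.1 p.2)
          (fun a => Classical.propDecidable ((⊤ : SimpleGraph V).Adj a.1 a.2))
          (A.1 ×ˢ A.1ᶜ) = A.1 ×ˢ A.1ᶜ := by
        apply (config := { synthAssignedInstances := false }) Finset.filter_true_of_mem
        intro p hp
        simp only [Finset.mem_product, Finset.mem_compl] at hp
        exact (SimpleGraph.top_adj p.1 p.2).mpr (fun hc => hp.2 (hc ▸ hp.1))
      have hcompl : @Finset.filter (V × V) (fun p => Gᶜ.Adj p.1 p.2)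
          (fun a => Classical.propDecidable (Gᶜ.Adj a.1 a.2)) (A.1 ×ˢ A.1ᶜ)
          = @Finset.filter (V × V) (fun p => ¬ G.Adj p.1 p.2)
          (fun a => Classical.propDecidable (¬ G.Adj a.1 a.2)) (A.1 ×ˢ A.1ᶜ) := by
        apply (config := { synthAssignedInstances := false }) Finset.filter_congr
        intro p hp
        simp only [Finset.mem_product, Finset.mem_compl] at hp
        rw [SimpleGraph.compl_adj]
        exact and_iff_right (fun hc => hp.2 (hc ▸ hp.1))
      rw [degree_eq_card, degree_eq_card, degree_eq_card, htop, hcompl]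
      convert Finset.card_filter_add_card_filter_not (s := A.1 ×ˢ A.1ᶜ)
        (fun p => G.Adj p.1 p.2)
    rw [if_pos rfl, if_pos rfl, if_pos rfl,
      if_neg ((tokenGraph G k).loopless.irrefl A), if_neg ((tokenGraph Gᶜ k).loopless.irrefl A),
      if_neg ((tokenGraph (⊤ : SimpleGraph V) k).loopless.irrefl A),
      sub_zero, sub_zero, sub_zero]
    exact_mod_cast congrArg (Nat.cast : ℕ → ℝ) hdeg
  · rw [if_neg h, if_neg h, if_neg h, zero_sub, zero_sub, zero_sub]
    by_cases h1 : (tokenGraph G k).Adj A C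
    · rw [if_pos h1, if_neg (token_adj_not_both G h1),
        if_pos ((token_adj_top_iff G).mpr (Or.inl h1))]
      ring
    · by_cases h2 : (tokenGraph Gᶜ k).Adj A C
      · rw [if_neg h1, if_pos h2, if_pos ((token_adj_top_iff G).mpr (Or.inr h2))]
        ring
      · rw [if_neg h1, if_neg h2, if_neg (fun hc => by
          rcases (token_adj_top_iff G).mp hc with hc' | hc'
          exacts [h1 hc', h2 hc'])]
        ring

end TokenAux

theorem token_lap_commute_compl {V : Type*} [Fintype V] [DecidableEq V]
    (G : SimpleGraph V) (k : ℕ) :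
    (tokenGraph G k).lapMatrix ℝ * (tokenGraph Gᶜ k).lapMatrix ℝ =
      (tokenGraph Gᶜ k).lapMatrix ℝ * (tokenGraph G k).lapMatrix ℝ := by
  cases k with
  | zero =>
    haveI : Subsingleton {s : Finset V // s.card = 0} :=
      ⟨fun a b => Subtype.ext (by
        rw [Finset.card_eq_zero.mp a.2, Finset.card_eq_zero.mp b.2])⟩
    ext A C
    rw [Matrix.mul_apply, Matrix.mul_apply]
    refine Finset.sum_congr rfl fun B _ => ?_
    obtain rfl : A = C := Subsingleton.elim _ _
    obtain rfl : B = A := Subsingleton.elim _ _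
    exact mul_comm _ _
  | succ m =>
    have hF := TokenAux.lap_add_compl G (m+1)
    have hC : (tokenGraph Gᶜ (m+1)).lapMatrix ℝ
        = (tokenGraph (⊤ : SimpleGraph V) (m+1)).lapMatrix ℝ
          - (tokenGraph G (m+1)).lapMatrix ℝ := eq_sub_of_add_eq' hF
    rw [hC, Matrix.mul_sub, Matrix.sub_mul, TokenAux.lap_comm_top G m]
end
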